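/- Let L be a G-graded Lie algebra with dim L_g ≤ 1 for all g, over an infinite field K. If M₁ and M₂ are left-normed Lie monomials in graded variables whose sequences of variable degrees coincide (h(M₁) = h(M₂)), then M₁ is a graded identity of L if and only if M₂ is a graded identity of L. -/

import Mathlib

/-- Left-normed Lie monomial `[x₁,...,x_n]` of a list of elements. -/
def leftNormed {L : Type*} [LieRing L] : List L → L
  | [] => 0
  | a :: t => t.foldl (fun u v => ⁅u, v⁆) a

section aux

variable {K L : Type*} [CommRing K] [LieRing L] [LieAlgebra K L]

lemma foldl_lie_smul (l : List (K × L)) (c : K) (u : L) :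
    (l.map (fun p => p.1 • p.2)).foldl (fun x y => ⁅x, y⁆) (c • u) =
      (c * (l.map Prod.fst).prod) • (l.map Prod.snd).foldl (fun x y => ⁅x, y⁆) u := by
  induction l generalizing c u with
  | nil => simp
  | cons p t ih =>
    simp only [List.map_cons, List.foldl_cons, List.prod_cons]
    rw [show ⁅c • u, p.1 • p.2⁆ = (c * p.1) • ⁅u, p.2⁆ by
      rw [smul_lie, lie_smul, smul_smul], ih, mul_assoc]

lemma leftNormed_map_smul (l : List (K × L)) :
    leftNormed (l.map fun p => p.1 • p.2) =
      (l.map Prod.fst).prod • leftNormed (l.map Prod.snd) := by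
  cases l with
  | nil => simp [leftNormed]
  | cons p t =>
    simp only [List.map_cons, leftNormed, List.prod_cons]
    exact foldl_lie_smul t p.1 p.2

lemma leftNormed_ofFn_smul {n : ℕ} (β : Fin n → K) (e : Fin n → L) :
    leftNormed (List.ofFn fun k => β k • e k) = (∏ k, β k) • leftNormed (List.ofFn e) := by
  have h := leftNormed_map_smul (L := L) (List.ofFn fun k => (β k, e k))
  simpa [List.map_ofFn, Function.comp_def, List.prod_ofFn] using h

end aux

/-- Let `L` be a `G`-graded Lie algebra over an infinite field of characteristic ≠ 2
with `dim L_g ≤ 1` for all `g`. If two left-normed Lie monomials in graded variables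
(with variable index maps `i₁`, `i₂` and variable degrees `gd₁`, `gd₂`) have the same
sequence of variable degrees, then one is a graded identity of `L` iff the other is. -/
theorem stmt_12 {K G L : Type*} [Field K] [Infinite K] (hchar : ringChar K ≠ 2)
    [Group G] [LieRing L] [LieAlgebra K L]
    (Lg : G → Submodule K L) (hdim : ∀ g, Module.rank K (Lg g) ≤ 1)
    (hgr : ∀ g h : G, ∀ x ∈ Lg g, ∀ y ∈ Lg h, ⁅x, y⁆ ∈ Lg (g * h))
    {n r₁ r₂ : ℕ} (i₁ : Fin n → Fin r₁) (i₂ : Fin n → Fin r₂)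
    (gd₁ : Fin r₁ → G) (gd₂ : Fin r₂ → G)
    (hdeg : gd₁ ∘ i₁ = gd₂ ∘ i₂) :
    ((∀ a : Fin r₁ → L, (∀ k, a k ∈ Lg (gd₁ k)) →
        leftNormed (List.ofFn (a ∘ i₁)) = 0) ↔
      (∀ a : Fin r₂ → L, (∀ k, a k ∈ Lg (gd₂ k)) →
        leftNormed (List.ofFn (a ∘ i₂)) = 0)) := by
  -- choose a generator of each homogeneous component
  have hgen : ∀ g : G, ∃ v₀ : Lg g, ∀ v : Lg g, ∃ r : K, r • v₀ = v := by
    intro g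
    exact rank_le_one_iff.mp (hdim g)
  choose e he using hgen
  set E : G → L := fun g => (e g : L) with hE
  have hEmem : ∀ g, E g ∈ Lg g := fun g => (e g).2
  have hmul : ∀ g, ∀ x ∈ Lg g, ∃ c : K, x = c • E g := by
    intro g x hx
    obtain ⟨c, hc⟩ := he g ⟨x, hx⟩
    exact ⟨c, by simpa using congrArg Subtype.val hc.symm⟩
  -- key reduction: the identity depends only on the degree sequence
  have key : ∀ {r : ℕ} (i : Fin n → Fin r) (gd : Fin r → G),
      ((∀ a : Fin r → L, (∀ k, a k ∈ Lg (gd k)) →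
        leftNormed (List.ofFn (a ∘ i)) = 0) ↔
        leftNormed (List.ofFn fun k => E (gd (i k))) = 0) := by
    intro r i gd
    constructor
    · intro h
      have := h (fun j => E (gd j)) (fun j => hEmem (gd j))
      simpa [Function.comp_def] using this
    · intro h a ha
      choose β hβ using fun k => hmul (gd (i k)) (a (i k)) (ha (i k))
      have : List.ofFn (a ∘ i) = List.ofFn fun k => β k • E (gd (i k)) := by
        congr 1
        funext k
        exact hβ k
      rw [this, leftNormed_ofFn_smul, h, smul_zero]
  rw [key i₁ gd₁, key i₂ gd₂]
  have : (fun k => E (gd₁ (i₁ k))) = fun k => E (gd₂ (i₂ k)) := by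
    funext k
    rw [show gd₁ (i₁ k) = gd₂ (i₂ k) from congrFun hdeg k]
  rw [this]
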